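/- Let a > 0, c ≠ 0, σ ≤ μ, σ < −μ, μ ≠ 0, δ ∈ (0, |a/c|), and suppose r D1 − 1 ≤ −μ/σ. Then: (C) e^{μr} + (σ/μ)(e^{μr} − 1) ≥ 0, and consequently the supremum of I2(û, δ) over û ∈ [−δ, (rD1 − 1)δ] equals I2((rD1 − 1)δ, δ); (D) the supremum of I1(û, δ) over û ∈ [(rD1 − 1)δ, −μδ/σ] equals I1(−μδ/σ, δ); (E) I2((rD1 − 1)δ, δ) ≤ I1(−μδ/σ, δ). -/

import Mathlib

/-- The constant `D₁ = (|μ|+|σ|)(1 + (|μ|+|σ|)|c|δ)`. -/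
noncomputable def D1 (μ σ c δ : ℝ) : ℝ := (|μ| + |σ|) * (1 + (|μ| + |σ|) * |c| * δ)

/-- The constant `D₂ = (D₁² + (|μ|+|σ|)³|c|δ)(1 + |σc|δ)`. -/
noncomputable def D2 (μ σ c δ : ℝ) : ℝ :=
  ((D1 μ σ c δ) ^ 2 + (|μ| + |σ|) ^ 3 * |c| * δ) * (1 + |σ * c| * δ)

/-- The profile `η̄` used to define `η_{(3)}`. -/
noncomputable def etabar (δ d1 d2 s : ℝ) : ℝ :=
  if s ≤ 0 then -δ
  else if s < d1 / d2 then -δ + δ * d2 / 2 * s ^ 2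
  else -δ - δ * d1 ^ 2 / (2 * d2) + δ * d1 * s

/-- The shift `θ_shift` used to define `η_{(3)}`. -/
noncomputable def thetaShift (δ d1 d2 uh : ℝ) : ℝ :=
  if uh ≤ -δ + δ * d1 ^ 2 / (2 * d2) then Real.sqrt (2 * (uh + δ) / (d2 * δ))
  else (uh + δ + δ * d1 ^ 2 / (2 * d2)) / (d1 * δ)

/-- The extremal forcing functions `η_{(k)}` for `k = 1, 2, 3`. -/
noncomputable def etaK (μ σ c δ uh : ℝ) : ℕ → ℝ → ℝ
  | 1, θ => if θ < 0 then -δ else uh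
  | 2, θ => max (uh + D1 μ σ c δ * δ * θ) (-δ)
  | 3, θ => etabar δ (D1 μ σ c δ) (D2 μ σ c δ)
      (θ + thetaShift δ (D1 μ σ c δ) (D2 μ σ c δ) uh)
  | _, _ => 0

/-- `I(û, δ, ĉ, k) = û e^{μ(a+ĉδ)} + σ ∫_{-(a+ĉδ)}^{0} e^{-μθ} η_{(k)}(θ) dθ`
(the constants `D₁, D₂` in `η_{(k)}` are computed from `|c|`, while `ĉ` only enters
the integration limits). -/
noncomputable def Ifun (μ σ c a δ chat uh : ℝ) (k : ℕ) : ℝ :=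
  uh * Real.exp (μ * (a + chat * δ)) +
    σ * ∫ θ in (-(a + chat * δ))..(0 : ℝ), Real.exp (-μ * θ) * etaK μ σ c δ uh k θ

/-- `P(δ, c, k) = sup_{û ∈ [-δ, -μδ/σ]} I(û, δ, |c|, k)`. -/
noncomputable def Pfun (μ σ c a δ : ℝ) (k : ℕ) : ℝ :=
  sSup ((fun uh => Ifun μ σ c a δ |c| uh k) '' Set.Icc (-δ) (-μ * δ / σ))

/-- `r = a + |c|δ`. -/
noncomputable def rr (a c δ : ℝ) : ℝ := a + |c| * δ

/-- The explicit one-piece integral `I₁(û, δ)` (for `μ ≠ 0`). -/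
noncomputable def I1fun (μ σ c a δ uh : ℝ) : ℝ :=
  uh * (Real.exp (μ * rr a c δ) + σ / μ * (Real.exp (μ * rr a c δ) - 1)) +
    σ / μ * D1 μ σ c δ * δ *
      (1 / μ * (Real.exp (μ * rr a c δ) - 1) - rr a c δ * Real.exp (μ * rr a c δ))

/-- The explicit two-piece integral `I₂(û, δ)` (for `μ ≠ 0`). -/
noncomputable def I2fun (μ σ c a δ uh : ℝ) : ℝ :=
  uh * (Real.exp (μ * rr a c δ) - σ / μ) +
    σ / μ * δ * (D1 μ σ c δ / μ *
      (Real.exp (μ * (δ + uh) / (D1 μ σ c δ * δ)) - 1) - Real.exp (μ * rr a c δ))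


lemma aux_one_sub_mul_exp_le (x : ℝ) : (1 - x) * Real.exp x ≤ 1 := by
  have h := mul_le_mul_of_nonneg_right (Real.add_one_le_exp (-x)) (Real.exp_pos x).le
  have h2 : Real.exp (-x) * Real.exp x = 1 := by rw [← Real.exp_add]; simp
  nlinarith

lemma aux_hK (μ σ r : ℝ) (h1 : σ ≤ μ) (h2 : σ < -μ) (hμ : μ ≠ 0) (hr : 0 < r)
    (hbound : r * (|μ| + |σ|) ≤ 1 - μ / σ) :
    0 ≤ μ * (μ * Real.exp (μ * r) + σ * (Real.exp (μ * r) - 1)) := by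
  have hσ : σ < 0 := by linarith
  have hσne : σ ≠ 0 := hσ.ne
  rcases hμ.lt_or_gt with hμn | hμp
  · -- μ < 0
    have habs : |μ| + |σ| = -μ - σ := by rw [abs_of_neg hμn, abs_of_neg hσ]; ring
    rw [habs] at hbound
    -- P = r*(μ+σ), show P ≥ -1 + μ/σ hence ≥ -1
    have hdivσ : σ * (1 - μ / σ) = σ - μ := by field_simp
    have hb2 : σ - μ ≤ σ * (r * (-μ - σ)) := by
      have := mul_le_mul_of_nonpos_left hbound hσ.le
      linarith [hdivσ ▸ this]
    have hP : -1 ≤ r * (μ + σ) := by nlinarith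
    set y := -(μ * r) with hy
    have hy0 : 0 < y := by have : μ * r < 0 := mul_neg_of_neg_of_pos hμn hr; simp [hy]; linarith
    have hF2 : μ ≤ y * (μ + σ) := by nlinarith
    have hF5 : y ≤ 1 / 2 := by nlinarith
    set Y := Real.exp y with hY
    have hYpos : 0 < Y := Real.exp_pos y
    have hF1 : (1 - y) * Y ≤ 1 := aux_one_sub_mul_exp_le y
    have hprod : Real.exp (μ * r) * Y = 1 := by
      rw [hY, hy, ← Real.exp_add]; simp
    have g2 : μ * (1 - y) ≤ σ * y := by nlinarith
    have g1 : y * ((1 - y) * Y) ≤ y * 1 := mul_le_mul_of_nonneg_left hF1 hy0.le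
    have g3 : σ * (y * 1) ≤ σ * (y * ((1 - y) * Y)) := mul_le_mul_of_nonpos_left g1 hσ.le
    have g4 : μ * (1 - y) ≤ σ * (y * ((1 - y) * Y)) := by nlinarith
    have g5 : μ ≤ σ * (y * Y) := by nlinarith
    have g6 : σ * 1 ≤ σ * ((1 - y) * Y) := mul_le_mul_of_nonpos_left hF1 hσ.le
    have g7 : μ + σ ≤ σ * Y := by nlinarith
    have g8 : (μ + σ) * Real.exp (μ * r) ≤ σ * Y * Real.exp (μ * r) :=
      mul_le_mul_of_nonneg_right g7 (Real.exp_pos _).le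
    have g9 : σ * Y * Real.exp (μ * r) = σ := by
      rw [mul_assoc, mul_comm Y, hprod]; ring
    have h10 : μ * Real.exp (μ * r) + σ * (Real.exp (μ * r) - 1) ≤ 0 := by nlinarith
    nlinarith
  · -- μ > 0
    have habs : |μ| + |σ| = μ - σ := by rw [abs_of_pos hμp, abs_of_neg hσ]; ring
    rw [habs] at hbound
    have hdivσ : σ * (1 - μ / σ) = σ - μ := by field_simp
    have hb2 : σ - μ ≤ σ * (r * (μ - σ)) := by
      have := mul_le_mul_of_nonpos_left hbound hσ.le
      linarith [hdivσ ▸ this]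
    have hsr : 0 ≤ σ * r + 1 := by nlinarith
    have hx : μ * r ≤ -μ / σ := by
      rw [le_div_iff_of_neg hσ]
      nlinarith
    have hAle : Real.exp (μ * r) ≤ Real.exp (-μ / σ) := Real.exp_le_exp.2 hx
    have htan : (1 - -μ / σ) * Real.exp (-μ / σ) ≤ 1 := aux_one_sub_mul_exp_le _
    have hc1 : σ * (1 - -μ / σ) = σ + μ := by field_simp; ring
    have h5 : σ ≤ (σ + μ) * Real.exp (-μ / σ) := by
      have h := mul_le_mul_of_nonpos_left htan hσ.le
      have h2 : σ * ((1 - -μ / σ) * Real.exp (-μ / σ)) = (σ + μ) * Real.exp (-μ / σ) := by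
        rw [← mul_assoc, hc1]
      linarith [h2 ▸ h]
    have h6 : (σ + μ) * Real.exp (-μ / σ) ≤ (σ + μ) * Real.exp (μ * r) :=
      mul_le_mul_of_nonpos_left hAle (by linarith)
    nlinarith

lemma aux_exp_tangent (y z : ℝ) : Real.exp z * (y - z + 1) ≤ Real.exp y := by
  have h := mul_le_mul_of_nonneg_left (Real.add_one_le_exp (y - z)) (Real.exp_pos z).le
  have h2 : Real.exp z * Real.exp (y - z) = Real.exp y := by rw [← Real.exp_add]; ring_nf
  nlinarith

lemma aux_csSup_image {f : ℝ → ℝ} {a b : ℝ} (hab : a ≤ b)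
    (h : ∀ x ∈ Set.Icc a b, f x ≤ f b) :
    sSup (f '' Set.Icc a b) = f b :=
  IsGreatest.csSup_eq ⟨⟨b, ⟨hab, le_refl b⟩, rfl⟩, by rintro y ⟨x, hx, rfl⟩; exact h x hx⟩

set_option maxHeartbeats 1000000 in
/-- Lemma B.2 (C),(D),(E) of Humphries–Magpantay: behaviour of `I₁`
and `I₂` when `r D₁ - 1 ≤ -μ/σ`. -/
theorem stmt_17 (μ σ c a δ : ℝ) (ha : 0 < a) (hc : c ≠ 0)
    (h1 : σ ≤ μ) (h2 : σ < -μ) (hμ : μ ≠ 0)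
    (hδ0 : 0 < δ) (hδ1 : δ < |a / c|)
    (hyp : rr a c δ * D1 μ σ c δ - 1 ≤ -μ / σ) :
    -- (C)
    (0 ≤ Real.exp (μ * rr a c δ) + σ / μ * (Real.exp (μ * rr a c δ) - 1)) ∧
    sSup ((fun uh => I2fun μ σ c a δ uh) ''
        Set.Icc (-δ) ((rr a c δ * D1 μ σ c δ - 1) * δ)) =
      I2fun μ σ c a δ ((rr a c δ * D1 μ σ c δ - 1) * δ) ∧
    -- (D)
    sSup ((fun uh => I1fun μ σ c a δ uh) ''
        Set.Icc ((rr a c δ * D1 μ σ c δ - 1) * δ) (-μ * δ / σ)) =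
      I1fun μ σ c a δ (-μ * δ / σ) ∧
    -- (E)
    I2fun μ σ c a δ ((rr a c δ * D1 μ σ c δ - 1) * δ) ≤ I1fun μ σ c a δ (-μ * δ / σ) := by
  have hσ : σ < 0 := by linarith
  have hσne : σ ≠ 0 := hσ.ne
  have hr0 : 0 < rr a c δ := by
    have h0 : 0 ≤ |c| * δ := by positivity
    have : rr a c δ = a + |c| * δ := rfl
    linarith
  have habsμ : 0 < |μ| := abs_pos.2 hμ
  have habsσ : 0 < |σ| := abs_pos.2 hσne
  have hfac : (1 : ℝ) ≤ 1 + (|μ| + |σ|) * |c| * δ := by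
    have : 0 ≤ (|μ| + |σ|) * |c| * δ := by positivity
    linarith
  have hdge : |μ| + |σ| ≤ D1 μ σ c δ := by
    have hdef : D1 μ σ c δ = (|μ| + |σ|) * (1 + (|μ| + |σ|) * |c| * δ) := rfl
    nlinarith
  have hd0 : 0 < D1 μ σ c δ := by linarith
  set r := rr a c δ with hr
  set d := D1 μ σ c δ with hd
  set A := Real.exp (μ * r) with hA
  have hApos : 0 < A := Real.exp_pos _
  clear_value r d A
  -- the key nonnegativity
  have hbound : r * (|μ| + |σ|) ≤ 1 - μ / σ := by
    have h3 : r * (|μ| + |σ|) ≤ r * d := mul_le_mul_of_nonneg_left hdge hr0.le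
    have h4 : r * d - 1 ≤ -(μ / σ) := by rw [← neg_div]; exact hyp
    linarith
  have hK : 0 ≤ μ * (μ * A + σ * (A - 1)) := by
    rw [hA]; exact aux_hK μ σ r h1 h2 hμ hr0 hbound
  have hE : 0 ≤ A + σ / μ * (A - 1) := by
    have heq : A + σ / μ * (A - 1) = μ * (μ * A + σ * (A - 1)) / μ ^ 2 := by
      field_simp
    rw [heq]
    exact div_nonneg hK (by positivity)
  -- interval endpoints
  have hle1 : -δ ≤ (r * d - 1) * δ := by nlinarith [mul_pos hr0 hd0]
  have hle2 : (r * d - 1) * δ ≤ -μ * δ / σ := by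
    have h3 : (r * d - 1) * δ ≤ (-μ / σ) * δ := mul_le_mul_of_nonneg_right hyp hδ0.le
    have h4 : (-μ / σ) * δ = -μ * δ / σ := by ring
    linarith
  -- monotonicity of I2 on [-δ, (rd-1)δ]
  have hgu : μ * (δ + (r * d - 1) * δ) / (d * δ) = μ * r := by
    field_simp; ring
  have hI2mono : ∀ x ∈ Set.Icc (-δ) ((r * d - 1) * δ),
      I2fun μ σ c a δ x ≤ I2fun μ σ c a δ ((r * d - 1) * δ) := by
    intro x hx
    set G := μ * (δ + x) / (d * δ) with hG
    set B := Real.exp G with hB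
    have hBpos : 0 < B := Real.exp_pos _
    clear_value G B
    have hgx : G * (d * δ) = μ * (δ + x) := by rw [hG]; field_simp
    have hT : A * (G - μ * r + 1) ≤ B := by
      rw [hA, hB]; exact aux_exp_tangent G (μ * r)
    have hh1 : A - B ≤ A * (μ * r - G) := by linarith
    have hcoef : σ * δ * d ≤ 0 := by nlinarith
    have hh2 : σ * δ * d * (A * (μ * r - G)) ≤ σ * δ * d * (A - B) :=
      mul_le_mul_of_nonpos_left hh1 hcoef
    have hh3 : σ * δ * d * (A * (μ * r - G)) = σ * μ * A * ((r * d - 1) * δ - x) := by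
      linear_combination (-σ * A) * hgx
    have hμ2 : (0 : ℝ) < μ ^ 2 := by positivity
    rw [← mul_le_mul_iff_of_pos_right hμ2]
    have e1 : I2fun μ σ c a δ x * μ ^ 2 =
        x * (A * μ ^ 2 - σ * μ) + σ * δ * d * (B - 1) - σ * δ * μ * A := by
      simp only [I2fun, ← hr, ← hd, ← hA, ← hG, ← hB]
      field_simp; ring
    have e2 : I2fun μ σ c a δ ((r * d - 1) * δ) * μ ^ 2 =
        ((r * d - 1) * δ) * (A * μ ^ 2 - σ * μ) + σ * δ * d * (A - 1) - σ * δ * μ * A := by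
      simp only [I2fun, ← hr, ← hd, hgu, ← hA]
      field_simp; ring
    rw [e1, e2]
    have hxu : x ≤ (r * d - 1) * δ := hx.2
    nlinarith [mul_nonneg (sub_nonneg.2 hxu) hK]
  -- monotonicity of I1
  have hI1mono : ∀ x ∈ Set.Icc ((r * d - 1) * δ) (-μ * δ / σ),
      I1fun μ σ c a δ x ≤ I1fun μ σ c a δ (-μ * δ / σ) := by
    intro x hx
    have h5 := mul_le_mul_of_nonneg_right hx.2 hE
    simp only [I1fun, ← hr, ← hd, ← hA]
    linarith
  refine ⟨hE, ?_, ?_, ?_⟩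
  · exact aux_csSup_image hle1 hI2mono
  · exact aux_csSup_image hle2 hI1mono
  · -- (E)
    have hexpstar : Real.exp (μ * (δ + (r * d - 1) * δ) / (d * δ)) = A := by
      rw [hgu]; exact hA.symm
    have hkey : I1fun μ σ c a δ (-μ * δ / σ) - I2fun μ σ c a δ ((r * d - 1) * δ) =
        δ * (A + σ / μ * (A - 1)) * (1 - μ / σ - r * d) := by
      simp only [I1fun, I2fun, ← hr, ← hd, hexpstar, ← hA]
      field_simp
      ring
    have h4 : r * d - 1 ≤ -(μ / σ) := by rw [← neg_div]; exact hyp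
    nlinarith [mul_nonneg (mul_nonneg hδ0.le hE) (by linarith : (0:ℝ) ≤ 1 - μ / σ - r * d)]
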